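/- Let n be a nonnegative integer and let f_0, f_1, …, f_n : ℍ → ℂ be functions on the complex upper half-plane satisfying f_k(τ+1) = f_k(τ) for all τ ∈ ℍ and all 0 ≤ k ≤ n. If Σ_{k=0}^n τ^k · f_k(τ) = 0 for all τ ∈ ℍ, then f_k(τ) = 0 for all τ ∈ ℍ and all 0 ≤ k ≤ n. -/
import Mathlib


open UpperHalfPlane Finset Polynomial

/-- Lemma 3.1: if `f₀, …, f_n : ℍ → ℂ` are `1`-periodic and
`Σ_{k=0}^n τ^k f_k(τ) = 0` for all `τ ∈ ℍ`, then all `f_k` vanish identically. -/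
theorem stmt_2 (n : ℕ) (f : ℕ → UpperHalfPlane → ℂ)
    (hper : ∀ k ≤ n, ∀ τ : UpperHalfPlane, f k ((1 : ℝ) +ᵥ τ) = f k τ)
    (hsum : ∀ τ : UpperHalfPlane, ∑ k ∈ Finset.range (n + 1), (τ : ℂ) ^ k * f k τ = 0) :
    ∀ k ≤ n, ∀ τ : UpperHalfPlane, f k τ = 0 := by
  intro k hk τ
  -- periodicity for integer shifts
  have hperm : ∀ m : ℕ, ∀ j ≤ n, f j ((m : ℝ) +ᵥ τ) = f j τ := by
    intro m
    induction m with
    | zero => intro j hj; norm_num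
    | succ m ih =>
      intro j hj
      have : ((m + 1 : ℕ) : ℝ) +ᵥ τ = (1 : ℝ) +ᵥ ((m : ℝ) +ᵥ τ) := by
        apply UpperHalfPlane.ext
        simp [UpperHalfPlane.coe_vadd]
        ring
      rw [this, hper j hj _, ih j hj]
  set p : Polynomial ℂ := ∑ j ∈ Finset.range (n + 1), Polynomial.C (f j τ) * X ^ j with hp
  have hroot : ∀ m : ℕ, p.IsRoot ((τ : ℂ) + m) := by
    intro m
    have h1 := hsum ((m : ℝ) +ᵥ τ)
    have hc : (((m : ℝ) +ᵥ τ : UpperHalfPlane) : ℂ) = (τ : ℂ) + m := by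
      simp [UpperHalfPlane.coe_vadd]; ring
    simp only [Polynomial.IsRoot, hp, Polynomial.eval_finset_sum, Polynomial.eval_mul,
      Polynomial.eval_C, Polynomial.eval_pow, Polynomial.eval_X]
    rw [← h1]
    refine Finset.sum_congr rfl fun j hj => ?_
    rw [hperm m j (Nat.lt_succ_iff.mp (Finset.mem_range.mp hj)), hc]
    ring
  have hp0 : p = 0 := by
    apply Polynomial.eq_zero_of_infinite_isRoot
    apply Set.Infinite.mono (s := Set.range (fun m : ℕ => (τ : ℂ) + m))
    · rintro x ⟨m, rfl⟩; exact hroot m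
    · apply Set.infinite_range_of_injective
      intro a b hab
      simpa using hab
  have := congrArg (fun q => Polynomial.coeff q k) hp0
  simp only [hp, Polynomial.finset_sum_coeff, Polynomial.coeff_C_mul, Polynomial.coeff_X_pow,
    Polynomial.coeff_zero, mul_ite, mul_one, mul_zero] at this
  rwa [Finset.sum_ite_eq (Finset.range (n + 1)), if_pos (Finset.mem_range.mpr (Nat.lt_succ_of_le hk))] at this
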